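/- Let D = (Σ, Const) be a response-only declarative process (Const consists only of response constraints) and let I be a down-set of (Σ, ≲occ). Then ⪯_I equals the transpose of the restriction of ≲occ to I; that is, for all a,b ∈ I, a ⪯_I b if and only if b ≲occ a. -/

import Mathlib

/-- The restriction `r|_I := r ∩ (I × I)` of a relation to a set. -/
def restrictRel {α : Type*} (r : α → α → Prop) (I : Set α) : α → α → Prop :=
  fun a b => a ∈ I ∧ b ∈ I ∧ r a b

/-- `I` is a down-set of `(Σ, r)`. -/
def IsDownSet {α : Type*} (r : α → α → Prop) (I : Set α) : Prop :=
  ∀ a b, r a b → b ∈ I → a ∈ I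

/-- in a response-only declarative process, where
`≲occ = {(a,b) : Resp(b,a) ∈ Const}^⊕` and `→ord = Resp`, for any down-set
`I` of `(Σ, ≲occ)` the relation `⪯_I = (→ord|_I)^⊕` is the transpose of
`≲occ|_I`: for all `a, b ∈ I`, `a ⪯_I b` iff `b ≲occ a`. -/
theorem resp_only_preRel_transpose {α : Type*} [Fintype α]
    (Resp : α → α → Prop) (hR : ∀ a b, Resp a b → a ≠ b)
    (I : Set α)
    (hI : IsDownSet (Relation.ReflTransGen (fun a b => Resp b a)) I) :
    ∀ a ∈ I, ∀ b ∈ I,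
      (Relation.ReflTransGen (restrictRel Resp I) a b ↔
        Relation.ReflTransGen (fun x y => Resp y x) b a) := by
  intro a ha b hb
  have swap_iff : ∀ x y : α, Relation.ReflTransGen (fun p q => Resp q p) x y ↔
      Relation.ReflTransGen Resp y x := by
    intro x y
    exact Relation.reflTransGen_swap
  constructor
  · intro h
    rw [swap_iff]
    exact Relation.ReflTransGen.mono (fun x y (hxy : restrictRel Resp I x y) => hxy.2.2) _ _ h
  · intro h
    have h' : Relation.ReflTransGen Resp a b := (swap_iff b a).mp h
    have mem : ∀ c, Relation.ReflTransGen Resp a c → c ∈ I := by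
      intro c hc
      exact hI c a ((swap_iff c a).mpr hc) ha
    clear h hb
    induction h' with
    | refl => exact Relation.ReflTransGen.refl
    | tail h1 hstep ih =>
        exact Relation.ReflTransGen.tail ih ⟨mem _ h1, mem _ (h1.tail hstep), hstep⟩
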